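/- (Combination lemma) Let α and β be 3-partitions arising from E⁻¹-closed semikernels A = αᵗ and B = βᵗ of a digraph G. If βᵗ ∪ βᶠ ⊄⊆ αᵗ ∪ αᶠ (not a subset), then setting Q = βᵗ ∩ αᵖ, the set S = αᵗ ∪ Q is a nonempty-extension E⁻¹-closed semikernel with αᵗ ∪ αᶠ ⊊ S ∪ E⁻¹(S). -/
import Mathlib


/-- Out-neighbours of a set `X` under edge relation `E`. -/
def outS {V : Type*} (E : V → V → Prop) (X : Set V) : Set V := {y | ∃ x ∈ X, E x y}

/-- In-neighbours of a set `X` under edge relation `E`. -/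
def inS {V : Type*} (E : V → V → Prop) (X : Set V) : Set V := {y | ∃ x ∈ X, E y x}

/-- `K` is a kernel of the digraph `(G,E)`. -/
def IsKernel {V : Type*} (G : Set V) (E : V → V → Prop) (K : Set V) : Prop :=
  K ⊆ G ∧ inS E K = G \ K

/-- `S` is a semikernel of the digraph `(G,E)`. -/
def IsSemikernel {V : Type*} (G : Set V) (E : V → V → Prop) (S : Set V) : Prop :=
  S ⊆ G ∧ outS E S ⊆ inS E S ∧ inS E S ⊆ G \ S

theorem stmt11 {V : Type*} (G : Set V) (E : V → V → Prop)
    (hE : ∀ x y, E x y → x ∈ G ∧ y ∈ G) (A B : Set V)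
    (hA : IsSemikernel G E A) (hAcl : inS E (A ∪ inS E A) ⊆ A ∪ inS E A)
    (hB : IsSemikernel G E B) (hBcl : inS E (B ∪ inS E B) ⊆ B ∪ inS E B)
    (hns : ¬ (B ∪ inS E B ⊆ A ∪ inS E A)) :
    IsSemikernel G E (A ∪ (B ∩ (G \ (A ∪ inS E A)))) ∧
    inS E ((A ∪ (B ∩ (G \ (A ∪ inS E A)))) ∪ inS E (A ∪ (B ∩ (G \ (A ∪ inS E A)))))
        ⊆ (A ∪ (B ∩ (G \ (A ∪ inS E A)))) ∪ inS E (A ∪ (B ∩ (G \ (A ∪ inS E A)))) ∧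
    (A ∪ inS E A) ⊂
      (A ∪ (B ∩ (G \ (A ∪ inS E A)))) ∪ inS E (A ∪ (B ∩ (G \ (A ∪ inS E A)))) := by
  obtain ⟨hAG, hAout, hAin⟩ := hA
  obtain ⟨hBG, hBout, hBin⟩ := hB
  set Q : Set V := B ∩ (G \ (A ∪ inS E A)) with hQdef
  set S : Set V := A ∪ Q with hSdef
  have hQG : Q ⊆ G := fun x hx => hx.2.1
  have hSG : S ⊆ G := Set.union_subset hAG hQG
  -- inS S = inS A ∪ inS Q pointwise
  have hinA_sub : inS E A ⊆ inS E S := fun y ⟨x, hx, hyx⟩ => ⟨x, Or.inl hx, hyx⟩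
  have hinQ_sub : inS E Q ⊆ inS E S := fun y ⟨x, hx, hyx⟩ => ⟨x, Or.inr hx, hyx⟩
  -- inS S ⊆ G \ S
  have hSin : inS E S ⊆ G \ S := by
    rintro y ⟨x, hx, hyx⟩
    rcases hx with hxA | ⟨hxB, hxG, hxP⟩
    · have hy : y ∈ G \ A := hAin ⟨x, hxA, hyx⟩
      refine ⟨hy.1, ?_⟩
      rintro (hyA | ⟨_, _, hyP⟩)
      · exact hy.2 hyA
      · exact hyP (Or.inr ⟨x, hxA, hyx⟩)
    · refine ⟨(hE y x hyx).1, ?_⟩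
      rintro (hyA | ⟨hyB, _, _⟩)
      · exact hxP (Or.inr (hAout ⟨y, hyA, hyx⟩))
      · exact (hBin (hBout ⟨y, hyB, hyx⟩)).2 hxB
  -- outS S ⊆ inS S
  have hSout : outS E S ⊆ inS E S := by
    rintro y ⟨x, hx, hxy⟩
    rcases hx with hxA | ⟨hxB, hxG, hxP⟩
    · exact hinA_sub (hAout ⟨x, hxA, hxy⟩)
    · obtain ⟨b, hbB, hyb⟩ := hBout ⟨x, hxB, hxy⟩
      by_cases hb : b ∈ A ∪ inS E A
      · have hy : y ∈ A ∪ inS E A := hAcl ⟨b, hb, hyb⟩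
        rcases hy with hyA | hyin
        · exact absurd (Or.inr ⟨y, hyA, hxy⟩ : x ∈ A ∪ inS E A) hxP
        · exact hinA_sub hyin
      · exact hinQ_sub ⟨b, ⟨hbB, (hE y b hyb).2, hb⟩, hyb⟩
  refine ⟨⟨hSG, hSout, hSin⟩, ?_, ?_⟩
  · -- closure
    rintro z ⟨w, hw, hzw⟩
    rcases hw with hwS | ⟨x, hxS, hwx⟩
    · exact Or.inr ⟨w, hwS, hzw⟩
    · rcases hxS with hxA | ⟨hxB, hxG, hxP⟩
      · -- w ∈ inS A, so z ∈ inS (A ∪ inS A) ⊆ A ∪ inS A ⊆ S ∪ inS S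
        have hz : z ∈ A ∪ inS E A := hAcl ⟨w, Or.inr ⟨x, hxA, hwx⟩, hzw⟩
        rcases hz with hzA | hzin
        · exact Or.inl (Or.inl hzA)
        · exact Or.inr (hinA_sub hzin)
      · -- w ∈ inS Q ⊆ inS B, so z ∈ B ∪ inS B
        have hz : z ∈ B ∪ inS E B := hBcl ⟨w, Or.inr ⟨x, hxB, hwx⟩, hzw⟩
        rcases hz with hzB | ⟨b, hbB, hzb⟩
        · by_cases hzAP : z ∈ A ∪ inS E A
          · rcases hzAP with hzA | hzin
            · exact Or.inl (Or.inl hzA)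
            · exact Or.inr (hinA_sub hzin)
          · exact Or.inl (Or.inr ⟨hzB, hBG hzB, hzAP⟩)
        · by_cases hb : b ∈ A ∪ inS E A
          · have hz' : z ∈ A ∪ inS E A := hAcl ⟨b, hb, hzb⟩
            rcases hz' with hzA | hzin
            · exact Or.inl (Or.inl hzA)
            · exact Or.inr (hinA_sub hzin)
          · exact Or.inr (hinQ_sub ⟨b, ⟨hbB, (hE z b hzb).2, hb⟩, hzb⟩)
  · -- strict inclusion
    constructor
    · rintro y (hyA | hyin)
      · exact Or.inl (Or.inl hyA)
      · exact Or.inr (hinA_sub hyin)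
    · intro hcon
      apply hns
      intro w hw
      rcases hw with hwB | ⟨b, hbB, hwb⟩
      · by_cases hwAP : w ∈ A ∪ inS E A
        · exact hwAP
        · exact absurd (hcon (Or.inl (Or.inr ⟨hwB, hBG hwB, hwAP⟩))) hwAP
      · by_cases hb : b ∈ A ∪ inS E A
        · exact hAcl ⟨b, hb, hwb⟩
        · by_contra hwAP
          exact hwAP (hcon (Or.inr (hinQ_sub ⟨b, ⟨hbB, (hE w b hwb).2, hb⟩, hwb⟩)))
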